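/- arXiv:2412.00030 — 3 statements merged into one kernel-verified Lean document; each statement's English description precedes it below -/
import Mathlib

section
/- Let ν be a finite measure on a measurable space Ω, let f : Ω → ℝ be bounded measurable, and let h > 0. Then the supremum, over all finite measures m on Ω absolutely continuous with respect to ν such that ∫ (log(dm/dν) − 1) dm is well defined and finite, of the quantity ∫ f dm − h ∫ (log(dm/dν) − 1) dm, equals h ∫ exp(f/h) dν. -/
open MeasureTheory

lemma young_aux (a t : ℝ) (ha : 0 ≤ a) : a * t - a * Real.log a + a ≤ Real.exp t := by
  rcases eq_or_lt_of_le ha with rfl | ha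
  · simpa using (Real.exp_pos t).le
  · have h1 : t - Real.log a + 1 ≤ Real.exp (t - Real.log a) := Real.add_one_le_exp _
    have h2 : a * Real.exp (t - Real.log a) = Real.exp t := by
      rw [Real.exp_sub, Real.exp_log ha]
      field_simp
    calc a * t - a * Real.log a + a = a * (t - Real.log a + 1) := by ring
    _ ≤ a * Real.exp (t - Real.log a) := by
        exact mul_le_mul_of_nonneg_left h1 ha.le
    _ = Real.exp t := h2

lemma integrable_of_bdd {Ω : Type*} [MeasurableSpace Ω] {μ : Measure Ω} [IsFiniteMeasure μ]
    {f : Ω → ℝ} (hf : AEStronglyMeasurable f μ) {C : ℝ} (hC : ∀ x, |f x| ≤ C) :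
    Integrable f μ :=
  ⟨hf, HasFiniteIntegral.of_bounded (C := C) (ae_of_all _ fun x => by
    simpa [Real.norm_eq_abs] using hC x)⟩

/-- The Legendre–Fenchel conjugate of the scaled (un-normalized) relative entropy
`m ↦ h·∫(log(dm/dν) − 1)dm`: for bounded measurable `f` and `h > 0`, the supremum over
finite measures `m ≪ ν` with well-defined finite entropy of `∫f dm − h∫(log(dm/dν) − 1)dm`
equals `h ∫ exp(f/h) dν`. -/
theorem sSup_entropy_dual {Ω : Type*} [MeasurableSpace Ω] (ν : Measure Ω) [IsFiniteMeasure ν]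
    (f : Ω → ℝ) (hf : Measurable f) (hbd : ∃ C : ℝ, ∀ x, |f x| ≤ C)
    (h : ℝ) (hh : 0 < h) :
    sSup {v : ℝ | ∃ m : Measure Ω, IsFiniteMeasure m ∧ m ≪ ν ∧
        Integrable (fun x => Real.log ((m.rnDeriv ν x).toReal) - 1) m ∧
        v = (∫ x, f x ∂m) - h * ∫ x, (Real.log ((m.rnDeriv ν x).toReal) - 1) ∂m}
      = h * ∫ x, Real.exp (f x / h) ∂ν := by
  obtain ⟨C, hC⟩ := hbd
  set S := {v : ℝ | ∃ m : Measure Ω, IsFiniteMeasure m ∧ m ≪ ν ∧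
        Integrable (fun x => Real.log ((m.rnDeriv ν x).toReal) - 1) m ∧
        v = (∫ x, f x ∂m) - h * ∫ x, (Real.log ((m.rnDeriv ν x).toReal) - 1) ∂m} with hS
  -- the candidate maximizer
  set g : Ω → ℝ := fun x => Real.exp (f x / h) with hg
  have hgmeas : Measurable g := (hf.div_const h).exp
  have hgpos : ∀ x, 0 < g x := fun x => Real.exp_pos _
  have hgbd : ∀ x, |g x| ≤ Real.exp (|C| / h) := by
    intro x
    rw [abs_of_pos (hgpos x)]
    apply Real.exp_le_exp.2
    have h1 : f x ≤ |C| := (le_abs_self _).trans ((hC x).trans (le_abs_self C))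
    exact (div_le_div_iff_of_pos_right hh).2 h1
  have key_mem : (h * ∫ x, Real.exp (f x / h) ∂ν) ∈ S := by
    set m₀ := ν.withDensity (fun x => ENNReal.ofReal (g x)) with hm₀
    have hmeasE : Measurable fun x => ENNReal.ofReal (g x) := hgmeas.ennreal_ofReal
    have hfin : IsFiniteMeasure m₀ := by
      refine isFiniteMeasure_withDensity ?_
      have hb : ∫⁻ x, ENNReal.ofReal (g x) ∂ν ≤ ∫⁻ _, ENNReal.ofReal (Real.exp (|C| / h)) ∂ν := by
        refine lintegral_mono fun x => ENNReal.ofReal_le_ofReal ?_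
        simpa [abs_of_pos (hgpos x)] using hgbd x
      refine ne_of_lt (hb.trans_lt ?_)
      rw [lintegral_const]
      exact ENNReal.mul_lt_top ENNReal.ofReal_lt_top (measure_lt_top ν _)
    haveI := hfin
    have hac : m₀ ≪ ν := withDensity_absolutelyContinuous ν _
    have hrn : m₀.rnDeriv ν =ᵐ[ν] fun x => ENNReal.ofReal (g x) :=
      Measure.rnDeriv_withDensity ν hmeasE
    have hkey : (fun x => Real.log ((m₀.rnDeriv ν x).toReal) - 1) =ᵐ[m₀]
        fun x => f x / h - 1 := by
      filter_upwards [hrn.filter_mono hac.ae_le] with x hx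
      rw [hx, ENNReal.toReal_ofReal (hgpos x).le, hg]
      simp [Real.log_exp]
    have hintf : Integrable f m₀ := integrable_of_bdd hf.aestronglyMeasurable hC
    have hintc : Integrable (fun x => f x / h - 1) m₀ := by
      refine integrable_of_bdd ((hf.div_const h).sub measurable_const).aestronglyMeasurable
        (C := |C| / h + 1) fun x => ?_
      have h1 : |f x / h| ≤ |C| / h := by
        rw [abs_div, abs_of_pos hh]
        exact (div_le_div_iff_of_pos_right hh).2 ((hC x).trans (le_abs_self C))
      calc |f x / h - 1| ≤ |f x / h| + |(1 : ℝ)| := abs_sub (f x / h) (1 : ℝ)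
      _ ≤ |C| / h + 1 := by simp only [abs_one]; linarith [h1]
    refine ⟨m₀, hfin, hac, (hintc.congr hkey.symm), ?_⟩
    rw [integral_congr_ae hkey]
    have e1 : ∫ x, (f x / h - 1) ∂m₀ = (∫ x, f x ∂m₀) / h - (m₀ Set.univ).toReal := by
      rw [integral_sub (hintf.div_const h) (integrable_const 1), integral_div, integral_const]
      simp [smul_eq_mul]
      rfl
    have e2 : (m₀ Set.univ).toReal = ∫ x, Real.exp (f x / h) ∂ν := by
      rw [hm₀, withDensity_apply _ MeasurableSet.univ, Measure.restrict_univ]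
      rw [integral_eq_lintegral_of_nonneg_ae (ae_of_all _ fun x => (hgpos x).le)
        hgmeas.aestronglyMeasurable]
    rw [e1, e2]
    field_simp
    ring
  have key_ub : ∀ v ∈ S, v ≤ h * ∫ x, Real.exp (f x / h) ∂ν := by
    rintro v ⟨m, hmfin, hac, hint, rfl⟩
    haveI := hmfin
    set d : Ω → ℝ := fun x => (m.rnDeriv ν x).toReal with hd
    have hintf : Integrable f m := integrable_of_bdd hf.aestronglyMeasurable hC
    have e1 : ∫ x, f x ∂m = ∫ x, d x * f x ∂ν := by
      rw [← MeasureTheory.integral_rnDeriv_smul hac]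
      simp_rw [smul_eq_mul]
      rfl
    have e2 : ∫ x, (Real.log (d x) - 1) ∂m = ∫ x, d x * (Real.log (d x) - 1) ∂ν := by
      rw [← MeasureTheory.integral_rnDeriv_smul hac]
      simp_rw [smul_eq_mul]
      rfl
    have hi1 : Integrable (fun x => d x * f x) ν := by
      have := (MeasureTheory.integrable_rnDeriv_smul_iff hac).2 hintf
      simpa [smul_eq_mul] using this
    have hi2 : Integrable (fun x => d x * (Real.log (d x) - 1)) ν := by
      have := (MeasureTheory.integrable_rnDeriv_smul_iff hac).2 hint
      simpa [smul_eq_mul] using this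
    have hi3 : Integrable (fun x => h * Real.exp (f x / h)) ν :=
      (integrable_of_bdd hgmeas.aestronglyMeasurable hgbd).const_mul h
    rw [e1, e2, ← integral_const_mul, ← integral_sub hi1 (hi2.const_mul h)]
    calc ∫ x, (d x * f x - h * (d x * (Real.log (d x) - 1))) ∂ν
        ≤ ∫ x, h * Real.exp (f x / h) ∂ν := by
          refine integral_mono (hi1.sub (hi2.const_mul h)) hi3 fun x => ?_
          have hy := young_aux (d x) (f x / h) ENNReal.toReal_nonneg
          calc d x * f x - h * (d x * (Real.log (d x) - 1))
              = h * (d x * (f x / h) - d x * Real.log (d x) + d x) := by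
                field_simp
                ring
          _ ≤ h * Real.exp (f x / h) := mul_le_mul_of_nonneg_left hy hh.le
    _ = h * ∫ x, Real.exp (f x / h) ∂ν := integral_const_mul h _
  exact le_antisymm (csSup_le ⟨_, key_mem⟩ key_ub) (le_csSup ⟨_, key_ub⟩ key_mem)
end

section
/- Let ν be a finite measure on a measurable space Ω, let f : Ω → ℝ be bounded measurable, and let h > 0. The measure m* with density exp(f/h) with respect to ν satisfies ∫ f dm* − h ∫ (log(dm*/dν) − 1) dm* = h ∫ exp(f/h) dν, and m* is the unique maximizer of m ↦ ∫ f dm − h ∫ (log(dm/dν) − 1) dm among finite measures m ≪ ν for which this quantity is well defined and finite. -/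
open MeasureTheory

/-- The objective `m ↦ ∫ f dm − h ∫ (log(dm/dν) − 1) dm`. -/
noncomputable def entropyObjective {Ω : Type*} [MeasurableSpace Ω] (ν : Measure Ω)
    (f : Ω → ℝ) (h : ℝ) (m : Measure Ω) : ℝ :=
  (∫ x, f x ∂m) - h * ∫ x, (Real.log ((m.rnDeriv ν x).toReal) - 1) ∂m

private lemma keyIneq {h : ℝ} (hh : 0 < h) (a t : ℝ) (ht : 0 ≤ t) :
    t * (a - h * (Real.log t - 1)) ≤ h * Real.exp (a / h) := by
  rcases eq_or_lt_of_le ht with h0 | h0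
  · rw [← h0]
    have := Real.exp_pos (a / h)
    nlinarith
  · have hexp : h * Real.exp (a / h) = h * t * Real.exp (a / h - Real.log t) := by
      rw [Real.exp_sub, Real.exp_log h0]; field_simp
    have h1 := Real.add_one_le_exp (a / h - Real.log t)
    have h2 : h * t * ((a / h - Real.log t) + 1) ≤ h * t * Real.exp (a / h - Real.log t) :=
      mul_le_mul_of_nonneg_left h1 (by positivity)
    have ha : h * (a / h) = a := by field_simp
    nlinarith

private lemma keyIneqStrict {h : ℝ} (hh : 0 < h) (a t : ℝ) (ht : 0 ≤ t)
    (hne : t ≠ Real.exp (a / h)) :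
    t * (a - h * (Real.log t - 1)) < h * Real.exp (a / h) := by
  rcases eq_or_lt_of_le ht with h0 | h0
  · rw [← h0]
    have := Real.exp_pos (a / h)
    nlinarith
  · have hexp : h * Real.exp (a / h) = h * t * Real.exp (a / h - Real.log t) := by
      rw [Real.exp_sub, Real.exp_log h0]; field_simp
    have hx0 : a / h - Real.log t ≠ 0 := by
      intro hc
      apply hne
      have hlog : Real.log t = a / h := by linarith [sub_eq_zero.mp hc]
      rw [← hlog, Real.exp_log h0]
    have h1 := Real.add_one_lt_exp hx0
    have h2 : h * t * ((a / h - Real.log t) + 1) < h * t * Real.exp (a / h - Real.log t) :=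
      mul_lt_mul_of_pos_left h1 (by positivity)
    have ha : h * (a / h) = a := by field_simp
    nlinarith

/-- The measure `m*` with density `exp(f/h)` with respect to `ν` attains the value
`h ∫ exp(f/h) dν` of the objective `m ↦ ∫ f dm − h ∫ (log(dm/dν) − 1) dm`, and it is the
unique maximizer among finite measures `m ≪ ν` for which the objective is well defined
and finite. -/
theorem entropyObjective_unique_max {Ω : Type*} [MeasurableSpace Ω] (ν : Measure Ω)
    [IsFiniteMeasure ν] (f : Ω → ℝ) (hf : Measurable f) (hbd : ∃ C : ℝ, ∀ x, |f x| ≤ C)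
    (h : ℝ) (hh : 0 < h) :
    entropyObjective ν f h (ν.withDensity fun x => ENNReal.ofReal (Real.exp (f x / h)))
        = h * ∫ x, Real.exp (f x / h) ∂ν
    ∧ ∀ m : Measure Ω, IsFiniteMeasure m → m ≪ ν →
        Integrable (fun x => Real.log ((m.rnDeriv ν x).toReal) - 1) m →
        m ≠ ν.withDensity (fun x => ENNReal.ofReal (Real.exp (f x / h))) →
        entropyObjective ν f h m
          < entropyObjective ν f h
              (ν.withDensity fun x => ENNReal.ofReal (Real.exp (f x / h))) := by
  obtain ⟨C₀, hC₀⟩ := hbd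
  set C : ℝ := max C₀ 0 with hCdef
  have hC : ∀ x, |f x| ≤ C := fun x => le_trans (hC₀ x) (le_max_left _ _)
  have hC0 : (0:ℝ) ≤ C := le_max_right _ _
  set e : Ω → ℝ := fun x => Real.exp (f x / h) with he_def
  set w : Ω → ENNReal := fun x => ENNReal.ofReal (e x) with hw_def
  have he_pos : ∀ x, 0 < e x := fun x => Real.exp_pos _
  have he_bd : ∀ x, e x ≤ Real.exp (C / h) := by
    intro x
    apply Real.exp_le_exp.mpr
    gcongr
    exact (abs_le.mp (hC x)).2
  have he_meas : Measurable e := (hf.div_const h).exp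
  have hw_meas : Measurable w := he_meas.ennreal_ofReal
  -- a helper: bounded measurable functions are integrable w.r.t. any finite measure
  have hIntBd : ∀ (μ : Measure Ω) [IsFiniteMeasure μ] (φ : Ω → ℝ), Measurable φ →
      ∀ (B : ℝ), (∀ x, |φ x| ≤ B) → Integrable φ μ := by
    intro μ _ φ hφ B hB
    exact (integrable_const B).mono' hφ.aestronglyMeasurable
      (Filter.Eventually.of_forall fun x => by simpa using hB x)
  -- the candidate maximizer is a finite measure
  haveI hfin : IsFiniteMeasure (ν.withDensity w) := by
    apply isFiniteMeasure_withDensity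
    apply ne_top_of_le_ne_top
      (ENNReal.mul_ne_top ENNReal.ofReal_ne_top (measure_ne_top ν Set.univ))
    calc ∫⁻ x, w x ∂ν ≤ ∫⁻ _, ENNReal.ofReal (Real.exp (C / h)) ∂ν :=
          lintegral_mono fun x => ENNReal.ofReal_le_ofReal (he_bd x)
      _ = ENNReal.ofReal (Real.exp (C / h)) * ν Set.univ := lintegral_const _
  have hμν : ν.withDensity w ≪ ν := withDensity_absolutelyContinuous ν w
  have hrn : (ν.withDensity w).rnDeriv ν =ᵐ[ν] w := Measure.rnDeriv_withDensity ν hw_meas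
  have hrnToReal : (fun x => (((ν.withDensity w).rnDeriv ν) x).toReal) =ᵐ[ν] e :=
    hrn.mono fun x hx => by dsimp only; rw [hx]; exact ENNReal.toReal_ofReal (he_pos x).le
  -- integrability facts over ν
  have i3 : Integrable e ν := hIntBd ν e he_meas (Real.exp (C / h))
    (fun x => by rw [abs_of_pos (he_pos x)]; exact he_bd x)
  have i1 : Integrable (fun x => e x * f x) ν := by
    apply hIntBd ν _ (he_meas.mul hf) (Real.exp (C / h) * C)
    intro x
    show |e x * f x| ≤ _
    rw [abs_mul]
    exact mul_le_mul (by rw [abs_of_pos (he_pos x)]; exact he_bd x) (hC x) (abs_nonneg _)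
      (Real.exp_pos _).le
  have i2 : Integrable (fun x => e x * (f x / h - 1)) ν := by
    apply hIntBd ν _ (he_meas.mul ((hf.div_const h).sub measurable_const))
      (Real.exp (C / h) * (C / h + 1))
    intro x
    show |e x * (f x / h - 1)| ≤ _
    rw [abs_mul]
    apply mul_le_mul (by rw [abs_of_pos (he_pos x)]; exact he_bd x) _ (abs_nonneg _)
      (Real.exp_pos _).le
    calc |f x / h - 1| ≤ |f x / h| + 1 := by
          simpa using abs_sub (f x / h) 1
      _ ≤ C / h + 1 := by
          have h1 : |f x / h| = |f x| / h := by rw [abs_div, abs_of_pos hh]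
          have h2 : |f x| / h ≤ C / h := by gcongr; exact hC x
          linarith
  -- evaluate the objective at the candidate
  have key1 : entropyObjective ν f h (ν.withDensity w) = h * ∫ x, e x ∂ν := by
    unfold entropyObjective
    have hA : ∫ x, f x ∂(ν.withDensity w) = ∫ x, e x * f x ∂ν := by
      rw [← integral_rnDeriv_smul hμν (f := f)]
      exact integral_congr_ae (hrnToReal.mono fun x hx => by
        dsimp only at hx ⊢; rw [smul_eq_mul, hx])
    have hcongr : (fun x => Real.log ((((ν.withDensity w).rnDeriv ν) x).toReal) - 1)
        =ᵐ[ν.withDensity w] (fun x => f x / h - 1) := by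
      apply Filter.Eventually.filter_mono hμν.ae_le
      exact hrnToReal.mono fun x hx => by
        dsimp only at hx ⊢; rw [hx]; simp [he_def, Real.log_exp]
    have hB : ∫ x, (Real.log ((((ν.withDensity w).rnDeriv ν) x).toReal) - 1)
        ∂(ν.withDensity w) = ∫ x, e x * (f x / h - 1) ∂ν := by
      rw [integral_congr_ae hcongr, ← integral_rnDeriv_smul hμν
        (f := fun x => f x / h - 1)]
      exact integral_congr_ae (hrnToReal.mono fun x hx => by
        dsimp only at hx ⊢; rw [smul_eq_mul, hx])
    rw [hA, hB, ← integral_const_mul, ← integral_const_mul,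
      ← integral_sub i1 (i2.const_mul h)]
    apply integral_congr_ae
    apply Filter.Eventually.of_forall
    intro x
    have hx : h * (f x / h) = f x := by field_simp
    dsimp only
    linear_combination (-(e x)) * hx
  constructor
  · rw [key1]
  · intro m hmfin hmν hmint hne
    haveI := hmfin
    set g : Ω → ℝ := fun x => (m.rnDeriv ν x).toReal with hg_def
    have hg_nonneg : ∀ x, 0 ≤ g x := fun x => ENNReal.toReal_nonneg
    set φ : Ω → ℝ := fun x => f x - h * (Real.log (g x) - 1) with hφ_def
    have hfInt_m : Integrable f m := hIntBd m f hf C hC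
    have hφInt : Integrable φ m := hfInt_m.sub (hmint.const_mul h)
    have hobj_m : entropyObjective ν f h m = ∫ x, g x * φ x ∂ν := by
      unfold entropyObjective
      rw [← integral_const_mul, ← integral_sub hfInt_m (hmint.const_mul h)]
      rw [← integral_rnDeriv_smul hmν (f := φ)]
      rfl
    have hAint : Integrable (fun x => g x * φ x) ν := by
      have := (integrable_rnDeriv_smul_iff hmν (f := φ)).mpr hφInt
      simpa [smul_eq_mul] using this
    have hAle : ∀ x, g x * φ x ≤ h * e x := fun x => keyIneq hh (f x) (g x) (hg_nonneg x)
    -- the densities must differ on a positive measure set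
    have hne_ae : ¬ (g =ᵐ[ν] e) := by
      intro hgE
      apply hne
      have hlt := Measure.rnDeriv_lt_top m ν
      have : m.rnDeriv ν =ᵐ[ν] w := by
        filter_upwards [hgE, hlt] with x hx hx'
        rw [← ENNReal.ofReal_toReal hx'.ne, hw_def]
        exact congrArg ENNReal.ofReal hx
      rw [← Measure.withDensity_rnDeriv_eq m ν hmν]
      exact withDensity_congr_ae this
    have hpos : 0 < ν {x | g x ≠ e x} := by
      rw [pos_iff_ne_zero]
      intro hzero
      exact hne_ae (ae_iff.mpr hzero)
    -- integral strict inequality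
    set D : Ω → ℝ := fun x => h * e x - g x * φ x with hD_def
    have hD_int : Integrable D ν := (i3.const_mul h).sub hAint
    have hD_nonneg : ∀ x, 0 ≤ D x := fun x => sub_nonneg.mpr (hAle x)
    have hD_pos : ∀ x, g x ≠ e x → 0 < D x := fun x hx =>
      sub_pos.mpr (keyIneqStrict hh (f x) (g x) (hg_nonneg x) hx)
    have hsupp : {x | g x ≠ e x} ⊆ Function.support D := fun x hx => (hD_pos x hx).ne'
    have hintD : 0 < ∫ x, D x ∂ν := by
      rw [integral_pos_iff_support_of_nonneg hD_nonneg hD_int]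
      exact lt_of_lt_of_le hpos (measure_mono hsupp)
    have hsub : ∫ x, D x ∂ν = ∫ x, h * e x ∂ν - ∫ x, g x * φ x ∂ν :=
      integral_sub (i3.const_mul h) hAint
    rw [hobj_m, key1, ← integral_const_mul]
    linarith [hsub ▸ hintD]
end

section
/- Let N ≥ 1, let μ₀, …, μ_N be σ-finite measures on ℝ, and let g_k : ℝ × ℝ → [0, ∞) be measurable for k = 0, …, N−1, such that the function (x₀, …, x_N) ↦ ∏_{k=0}^{N−1} g_k(x_k, x_{k+1}) is integrable with respect to the product measure μ₀ ⊗ ⋯ ⊗ μ_N. Let P be the measure on ℝ^{N+1} with this density with respect to μ₀ ⊗ ⋯ ⊗ μ_N. Then for each i ∈ {0, …, N}, the pushforward of P under the i-th coordinate projection has density x ↦ u_i(x) · d_i(x) with respect to μ_i, where u_i(x) = ∫ ∏_{k=0}^{i−1} g_k(x_k, x_{k+1}) d(μ₀ ⊗ ⋯ ⊗ μ_{i−1}) evaluated with x_i = x (and u_0 ≡ 1), and d_i(x) = ∫ ∏_{k=i}^{N−1} g_k(x_k, x_{k+1}) d(μ_{i+1} ⊗ ⋯ ⊗ μ_N) evaluated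 with x_i = x (and d_N ≡ 1). -/
open MeasureTheory
open scoped ENNReal

/-- The pairwise-factorized density `(x₀,…,x_N) ↦ ∏_{k=0}^{N−1} g_k(x_k, x_{k+1})`. -/
noncomputable def pathProd (N : ℕ) (g : Fin N → ℝ → ℝ → ℝ) (x : Fin (N + 1) → ℝ) : ℝ≥0∞ :=
  ∏ k : Fin N, ENNReal.ofReal (g k (x k.castSucc) (x k.succ))

/-- The "up" potential `u_i(x) = ∫ ∏_{k=0}^{i−1} g_k(x_k, x_{k+1}) d(μ₀ ⊗ ⋯ ⊗ μ_{i−1})`,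
with the `i`-th coordinate fixed at `x` (so `u_0 ≡ 1`). -/
noncomputable def upPot (N : ℕ) (μ : Fin (N + 1) → Measure ℝ) (g : Fin N → ℝ → ℝ → ℝ)
    (i : ℕ) (hi : i ≤ N) (x : ℝ) : ℝ≥0∞ :=
  ∫⁻ y : Fin i → ℝ,
    ∏ k : Fin i,
      ENNReal.ofReal (g (Fin.castLE hi k)
        ((Fin.snoc y x : Fin (i + 1) → ℝ) k.castSucc)
        ((Fin.snoc y x : Fin (i + 1) → ℝ) k.succ))
    ∂(Measure.pi fun j : Fin i => μ (Fin.castLE (by omega) j))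

/-- The "down" potential `d_i(x) = ∫ ∏_{k=i}^{N−1} g_k(x_k, x_{k+1}) d(μ_{i+1} ⊗ ⋯ ⊗ μ_N)`,
with the `i`-th coordinate fixed at `x` (so `d_N ≡ 1`). -/
noncomputable def downPot (N : ℕ) (μ : Fin (N + 1) → Measure ℝ) (g : Fin N → ℝ → ℝ → ℝ)
    (i : ℕ) (hi : i ≤ N) (x : ℝ) : ℝ≥0∞ :=
  ∫⁻ y : Fin (N - i) → ℝ,
    ∏ l : Fin (N - i),
      ENNReal.ofReal (g ⟨i + l.val, by have := l.isLt; omega⟩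
        ((Fin.cons x y : Fin (N - i + 1) → ℝ) l.castSucc)
        ((Fin.cons x y : Fin (N - i + 1) → ℝ) l.succ))
    ∂(Measure.pi fun j : Fin (N - i) => μ ⟨i + 1 + j.val, by have := j.isLt; omega⟩)

lemma measurable_pathProd (N : ℕ) (g : Fin N → ℝ → ℝ → ℝ)
    (hg : ∀ k, Measurable (Function.uncurry (g k))) : Measurable (pathProd N g) := by
  unfold pathProd
  refine Finset.measurable_prod _ fun k _ => ?_
  apply Measurable.ennreal_ofReal
  exact (hg k).comp (((measurable_pi_apply _).prodMk (measurable_pi_apply _) :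
    Measurable fun x : Fin (N + 1) → ℝ => (x k.castSucc, x k.succ)))

lemma measurable_snoc_apply {k : ℕ} (x : ℝ) (m : Fin (k + 1)) :
    Measurable fun a : Fin k → ℝ => (Fin.snoc a x : Fin (k + 1) → ℝ) m := by
  rcases Fin.eq_castSucc_or_eq_last m with ⟨m', rfl⟩ | rfl
  · simp only [Fin.snoc_castSucc]; exact measurable_pi_apply _
  · simp only [Fin.snoc_last]; exact measurable_const

lemma measurable_cons_apply {k : ℕ} (x : ℝ) (m : Fin (k + 1)) :
    Measurable fun b : Fin k → ℝ => (Fin.cons x b : Fin (k + 1) → ℝ) m := by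
  rcases Fin.eq_zero_or_eq_succ m with rfl | ⟨m', rfl⟩
  · simp only [Fin.cons_zero]; exact measurable_const
  · simp only [Fin.cons_succ]; exact measurable_pi_apply _

lemma marginal_key (N : ℕ) (μ : Fin (N + 1) → Measure ℝ) [∀ j, SigmaFinite (μ j)]
    (g : Fin N → ℝ → ℝ → ℝ) (hg : ∀ k, Measurable (Function.uncurry (g k)))
    (i : Fin (N + 1)) (x : ℝ) :
    (∫⁻ y : Fin N → ℝ, pathProd N g (i.insertNth x y)
        ∂(Measure.pi fun j : Fin N => μ (i.succAbove j)))
      = upPot N μ g i.val (Nat.lt_succ_iff.mp i.isLt) x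
          * downPot N μ g i.val (Nat.lt_succ_iff.mp i.isLt) x := by
  have hn : (i : ℕ) ≤ N := Nat.lt_succ_iff.mp i.isLt
  set n := (i : ℕ) with hn_def
  have hNn : n + (N - n) = N := by omega
  let eι : Fin n ⊕ Fin (N - n) ≃ Fin N := finSumFinEquiv.trans (finCongr hNn)
  have heL : ∀ j : Fin n, (eι (Sum.inl j) : ℕ) = (j : ℕ) := by
    intro j; simp [eι]
  have heR : ∀ l : Fin (N - n), (eι (Sum.inr l) : ℕ) = n + (l : ℕ) := by
    intro l; simp [eι]
  have hsuccL : ∀ j : Fin n, i.succAbove (eι (Sum.inl j)) = ⟨(j : ℕ), by omega⟩ := by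
    intro j
    rw [Fin.succAbove_of_castSucc_lt]
    · exact Fin.ext (by simp [heL j])
    · rw [Fin.lt_iff_val_lt_val]
      simp only [Fin.coe_castSucc, heL j]; exact j.isLt
  have hsuccR : ∀ l : Fin (N - n), i.succAbove (eι (Sum.inr l)) = ⟨n + 1 + (l : ℕ), by omega⟩ := by
    intro l
    rw [Fin.succAbove_of_le_castSucc]
    · exact Fin.ext (by simp [heR l]; omega)
    · rw [Fin.le_iff_val_le_val]
      simp only [heR l, Fin.coe_castSucc]
      omega
  haveI : ∀ s : Fin n ⊕ Fin (N - n), SigmaFinite (μ (i.succAbove (eι s))) := fun s =>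
    inferInstance
  have h2 := measurePreserving_piCongrLeft (fun j : Fin N => μ (i.succAbove j)) eι
  have h3 := measurePreserving_sumPiEquivProdPi_symm
    (fun s : Fin n ⊕ Fin (N - n) => μ (i.succAbove (eι s)))
  have h23 := h2.comp h3
  have hins : (Fin.insertNth (α := fun _ : Fin (N + 1) => ℝ) i x)
      = fun y => (MeasurableEquiv.piFinSuccAbove (fun _ => ℝ) i).symm (x, y) := by
    funext y
    simp [MeasurableEquiv.piFinSuccAbove_symm_apply, Fin.insertNthEquiv]
  have hF : Measurable (fun y : Fin N → ℝ => pathProd N g (i.insertNth x y)) := by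
    apply (measurable_pathProd N g hg).comp
    show Measurable (Fin.insertNth (α := fun _ : Fin (N + 1) => ℝ) i x)
    rw [hins]
    exact (MeasurableEquiv.piFinSuccAbove (fun _ => ℝ) i).symm.measurable.comp
      measurable_prodMk_left
  rw [← h23.lintegral_comp hF]
  have hpt : ∀ p : (Fin n → ℝ) × (Fin (N - n) → ℝ),
      pathProd N g (i.insertNth x
        ((MeasurableEquiv.piCongrLeft (fun _ => ℝ) eι ∘
          (MeasurableEquiv.sumPiEquivProdPi fun _ => ℝ).symm) p))
        = (∏ k : Fin n,
            ENNReal.ofReal (g (Fin.castLE hn k)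
              ((Fin.snoc p.1 x : Fin (n + 1) → ℝ) k.castSucc)
              ((Fin.snoc p.1 x : Fin (n + 1) → ℝ) k.succ)))
          * ∏ l : Fin (N - n),
              ENNReal.ofReal (g ⟨n + (l : ℕ), by have := l.isLt; omega⟩
                ((Fin.cons x p.2 : Fin (N - n + 1) → ℝ) l.castSucc)
                ((Fin.cons x p.2 : Fin (N - n + 1) → ℝ) l.succ)) := by
    rintro ⟨a, b⟩
    dsimp only
    set z : Fin (N + 1) → ℝ := i.insertNth x
      ((MeasurableEquiv.piCongrLeft (fun _ => ℝ) eι ∘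
        (MeasurableEquiv.sumPiEquivProdPi fun _ => ℝ).symm) (a, b)) with hz_def
    have hzL : ∀ j : Fin n, z (i.succAbove (eι (Sum.inl j))) = a j := by
      intro j
      rw [hz_def]
      rw [Fin.insertNth_apply_succAbove]
      exact Equiv.piCongrLeft_sumInl (fun _ => ℝ) eι a b j
    have hzR : ∀ l : Fin (N - n), z (i.succAbove (eι (Sum.inr l))) = b l := by
      intro l
      rw [hz_def]
      rw [Fin.insertNth_apply_succAbove]
      exact Equiv.piCongrLeft_sumInr (fun _ => ℝ) eι a b l
    have hzi : z i = x := by rw [hz_def]; exact Fin.insertNth_apply_same (α := fun _ : Fin (N + 1) => ℝ) i x _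
    show (∏ k : Fin N, ENNReal.ofReal (g k (z k.castSucc) (z k.succ))) = _
    rw [← Equiv.prod_comp eι, Fintype.prod_sum_type]
    congr 1
    · apply Finset.prod_congr rfl
      intro j _
      have hidx : eι (Sum.inl j) = Fin.castLE hn j := Fin.ext (by simp [heL j])
      have harg1 : z (eι (Sum.inl j)).castSucc = a j := by
        have : (eι (Sum.inl j)).castSucc = i.succAbove (eι (Sum.inl j)) := by
          rw [hsuccL j]; exact Fin.ext (by simp [heL j])
        rw [this, hzL j]
      have hsnoc1 : (Fin.snoc a x : Fin (n + 1) → ℝ) j.castSucc = a j := Fin.snoc_castSucc _ _ _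
      have harg2 : z (eι (Sum.inl j)).succ
          = (Fin.snoc a x : Fin (n + 1) → ℝ) j.succ := by
        by_cases hj : (j : ℕ) + 1 < n
        · have h1 : (eι (Sum.inl j)).succ = i.succAbove (eι (Sum.inl ⟨(j : ℕ) + 1, hj⟩)) := by
            rw [hsuccL]; exact Fin.ext (by simp [heL j])
          have h2 : (Fin.snoc a x : Fin (n + 1) → ℝ) j.succ = a ⟨(j : ℕ) + 1, hj⟩ := by
            have : j.succ = (Fin.castSucc ⟨(j : ℕ) + 1, hj⟩ : Fin (n + 1)) :=
              Fin.ext (by simp)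
            rw [this, Fin.snoc_castSucc]
          rw [h1, hzL, h2]
        · have hj' : (j : ℕ) + 1 = n := by omega
          have h1 : (eι (Sum.inl j)).succ = i := Fin.ext (by simp [heL j, hj']; rfl)
          have h2 : (Fin.snoc a x : Fin (n + 1) → ℝ) j.succ = x := by
            have : j.succ = Fin.last n := Fin.ext (by simp [hj'])
            rw [this, Fin.snoc_last]
          rw [h1, hzi, h2]
      rw [harg1, harg2, hsnoc1, hidx]
    · apply Finset.prod_congr rfl
      intro l _
      have hidx : eι (Sum.inr l) = (⟨n + (l : ℕ), by have := l.isLt; omega⟩ : Fin N) :=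
        Fin.ext (by simp [heR l])
      have harg1 : z (eι (Sum.inr l)).castSucc
          = (Fin.cons x b : Fin (N - n + 1) → ℝ) l.castSucc := by
        by_cases hl : (l : ℕ) = 0
        · have h1 : (eι (Sum.inr l)).castSucc = i := Fin.ext (by simp [heR l, hl]; rfl)
          have h2 : l.castSucc = (0 : Fin (N - n + 1)) := Fin.ext (by simp [hl])
          rw [h1, hzi, h2, Fin.cons_zero]
        · have hl1 : (l : ℕ) - 1 < N - n := by have := l.isLt; omega
          have h1 : (eι (Sum.inr l)).castSucc
              = i.succAbove (eι (Sum.inr ⟨(l : ℕ) - 1, hl1⟩)) := by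
            rw [hsuccR]; exact Fin.ext (by simp [heR l]; omega)
          have h2 : l.castSucc = (⟨(l : ℕ) - 1, hl1⟩ : Fin (N - n)).succ :=
            Fin.ext (by simp; omega)
          rw [h1, hzR, h2, Fin.cons_succ]
      have harg2 : z (eι (Sum.inr l)).succ
          = (Fin.cons x b : Fin (N - n + 1) → ℝ) l.succ := by
        have h1 : (eι (Sum.inr l)).succ = i.succAbove (eι (Sum.inr l)) := by
          rw [hsuccR]; exact Fin.ext (by simp [heR l]; omega)
        rw [h1, hzR, Fin.cons_succ]
      rw [harg1, harg2, hidx]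
  simp_rw [hpt]
  have hA : Measurable fun a : Fin n → ℝ =>
      ∏ k : Fin n, ENNReal.ofReal (g (Fin.castLE hn k)
        ((Fin.snoc a x : Fin (n + 1) → ℝ) k.castSucc)
        ((Fin.snoc a x : Fin (n + 1) → ℝ) k.succ)) := by
    refine Finset.measurable_prod _ fun k _ => ?_
    apply Measurable.ennreal_ofReal
    exact (hg _).comp (((measurable_snoc_apply x _).prodMk (measurable_snoc_apply x _) :
      Measurable fun a : Fin n → ℝ => ((Fin.snoc a x : Fin (n + 1) → ℝ) k.castSucc,
        (Fin.snoc a x : Fin (n + 1) → ℝ) k.succ)))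
  have hB : Measurable fun b : Fin (N - n) → ℝ =>
      ∏ l : Fin (N - n), ENNReal.ofReal (g ⟨n + (l : ℕ), by have := l.isLt; omega⟩
        ((Fin.cons x b : Fin (N - n + 1) → ℝ) l.castSucc)
        ((Fin.cons x b : Fin (N - n + 1) → ℝ) l.succ)) := by
    refine Finset.measurable_prod _ fun l _ => ?_
    apply Measurable.ennreal_ofReal
    exact (hg _).comp (((measurable_cons_apply x _).prodMk (measurable_cons_apply x _) :
      Measurable fun b : Fin (N - n) → ℝ => ((Fin.cons x b : Fin (N - n + 1) → ℝ) l.castSucc,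
        (Fin.cons x b : Fin (N - n + 1) → ℝ) l.succ)))
  rw [lintegral_prod_mul hA.aemeasurable hB.aemeasurable]
  have hm1 : (fun j : Fin n => μ (i.succAbove (eι (Sum.inl j))))
      = fun j : Fin n => μ (Fin.castLE (by omega) j) := by
    funext j; rw [hsuccL j]; rfl
  have hm2 : (fun l : Fin (N - n) => μ (i.succAbove (eι (Sum.inr l))))
      = fun l : Fin (N - n) => μ ⟨n + 1 + (l : ℕ), by have := l.isLt; omega⟩ := by
    funext l; rw [hsuccR l]
  rw [hm1, hm2]
  rfl

/-- Single-time marginal of a pairwise-factorized measure: if `P` has density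
`∏_k g_k(x_k, x_{k+1})` with respect to `μ₀ ⊗ ⋯ ⊗ μ_N`, then the law of the `i`-th
coordinate under `P` has density `u_i · d_i` with respect to `μ_i`. -/
theorem map_eval_withDensity_pathProd (N : ℕ) (hN : 1 ≤ N)
    (μ : Fin (N + 1) → Measure ℝ) (hμ : ∀ j, SigmaFinite (μ j))
    (g : Fin N → ℝ → ℝ → ℝ)
    (hg : ∀ k, Measurable (Function.uncurry (g k)))
    (hg0 : ∀ k x y, 0 ≤ g k x y)
    (hint : (∫⁻ x : Fin (N + 1) → ℝ, pathProd N g x ∂(Measure.pi μ)) ≠ ⊤) :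
    ∀ i : Fin (N + 1),
      Measure.map (fun x : Fin (N + 1) → ℝ => x i)
          ((Measure.pi μ).withDensity (pathProd N g))
        = (μ i).withDensity fun x =>
            upPot N μ g i.val (Nat.lt_succ_iff.mp i.isLt) x
              * downPot N μ g i.val (Nat.lt_succ_iff.mp i.isLt) x := by
  intro i
  haveI : ∀ j, SigmaFinite (μ j) := hμ
  have hmi : Measurable fun x : Fin (N + 1) → ℝ => x i := measurable_pi_apply i
  refine Measure.ext fun s hs => ?_
  rw [Measure.map_apply hmi hs, withDensity_apply _ (hmi hs), withDensity_apply _ hs]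
  set T : Set (Fin (N + 1) → ℝ) := (fun x : Fin (N + 1) → ℝ => x i) ⁻¹' s with hT_def
  have hT : MeasurableSet T := hmi hs
  have hind : Measurable (T.indicator (pathProd N g)) :=
    (measurable_pathProd N g hg).indicator hT
  set e := MeasurableEquiv.piFinSuccAbove (fun _ : Fin (N + 1) => ℝ) i with he_def
  have hp1 := measurePreserving_piFinSuccAbove μ i
  have he : ∀ p : ℝ × (Fin N → ℝ), e.symm p = i.insertNth p.1 p.2 := by
    intro p
    simp [he_def, MeasurableEquiv.piFinSuccAbove_symm_apply, Fin.insertNthEquiv]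
  calc ∫⁻ x in T, pathProd N g x ∂Measure.pi μ
      = ∫⁻ x, T.indicator (pathProd N g) x ∂Measure.pi μ := (lintegral_indicator hT _).symm
    _ = ∫⁻ p, T.indicator (pathProd N g) (e.symm p)
          ∂((μ i).prod (Measure.pi fun j => μ (i.succAbove j))) :=
        ((hp1.symm e).lintegral_comp hind).symm
    _ = ∫⁻ x', ∫⁻ y, T.indicator (pathProd N g) (e.symm (x', y))
          ∂(Measure.pi fun j => μ (i.succAbove j)) ∂(μ i) :=
        lintegral_prod _ (hind.comp e.symm.measurable).aemeasurable
    _ = ∫⁻ x' in s, upPot N μ g i.val (Nat.lt_succ_iff.mp i.isLt) x'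
          * downPot N μ g i.val (Nat.lt_succ_iff.mp i.isLt) x' ∂(μ i) := by
        rw [← lintegral_indicator hs _]
        refine lintegral_congr fun x' => ?_
        by_cases hx : x' ∈ s
        · rw [Set.indicator_of_mem hx, ← marginal_key N μ g hg i x']
          refine lintegral_congr fun y => ?_
          rw [he (x', y)]
          apply Set.indicator_of_mem
          simp only [hT_def, Set.mem_preimage]
          rw [Fin.insertNth_apply_same (α := fun _ : Fin (N + 1) => ℝ) i x' y]
          exact hx
        · rw [Set.indicator_of_notMem hx]
          have hz : ∀ y : Fin N → ℝ, T.indicator (pathProd N g) (e.symm (x', y)) = 0 := by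
            intro y
            rw [he (x', y)]
            apply Set.indicator_of_notMem
            simp only [hT_def, Set.mem_preimage]
            rw [Fin.insertNth_apply_same (α := fun _ : Fin (N + 1) => ℝ) i x' y]
            exact hx
          simp only [hz, lintegral_zero]
end
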